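/- In one coupled step of the path coupling, if X'_v ≠ Y'_v for some node v ∈ S with v ≠ v₀, then there exists a flip path (v₀, v₁, …, v_ℓ = v) of length ℓ ≥ 1 in G, and moreover the proposals of v are the opposite of the last red/blue colors seen on this path in the respective chains: c^X_v = c_Y and c^Y_v = c_X, where (c_X, c_Y) = (c^X_{v_{ℓ−1}}, c^Y_{v_{ℓ−1}}) if ℓ > 1, and (c_X, c_Y) = (r, b) if ℓ = 1. -/

import Mathlib

open Finset

attribute [local instance] Classical.propDecidable

namespace LGCoupling

/-- Data of the path coupling of the Local Glauber dynamics: a graph `G`, `q` colors,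
the two special colors `r ≠ b`, the distinguished node `v₀`, and two colorings `X, Y`
agreeing everywhere except at `v₀`, where `X v₀ = r` and `Y v₀ = b`. -/
structure Setup (V : Type*) where
  G : SimpleGraph V
  q : ℕ
  r : Fin q
  b : Fin q
  v0 : V
  X : V → Fin q
  Y : V → Fin q

/-- The assumptions on the pair of colorings in the path coupling. -/
def Setup.Valid {V : Type*} (s : Setup V) : Prop :=
  s.r ≠ s.b ∧ s.X s.v0 = s.r ∧ s.Y s.v0 = s.b ∧ ∀ v : V, v ≠ s.v0 → s.X v = s.Y v

variable {V : Type*} [Fintype V] [DecidableEq V]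

/-- The neighborhood `N(v)` of `v` as a finset. -/
noncomputable def nbrs (G : SimpleGraph V) (v : V) : Finset V :=
  univ.filter (fun w => G.Adj v w)

/-- The acceptance condition of the Local Glauber rule at node `v`, for current coloring `σ`
and proposals `c`: `c v ∉ ⋃_{u ∈ N(v)} {σ u, c u}` and `c u ∉ {σ v, c v}` for all `u ∈ N(v)`. -/
def Accept (G : SimpleGraph V) {q : ℕ} (σ c : V → Fin q) (v : V) : Prop :=
  ∀ u : V, G.Adj v u → c v ≠ σ u ∧ c v ≠ c u ∧ c u ≠ σ v ∧ c u ≠ c v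

/-- One step of the Local Glauber rule, given proposals `c`. -/
noncomputable def stepFn (G : SimpleGraph V) {q : ℕ} (σ c : V → Fin q) : V → Fin q :=
  fun v => if Accept G σ c v then c v else σ v

/-- `B = {v ≠ v₀ : X v ∈ {r, b}}`. -/
noncomputable def Bset (s : Setup V) : Finset V :=
  univ.filter (fun v => v ≠ s.v0 ∧ (s.X v = s.r ∨ s.X v = s.b))

/-- `K = (⋃_{v ∈ B} N⁺(v)) \ {v₀}`. -/
noncomputable def Kset (s : Setup V) : Finset V :=
  ((Bset s).biUnion (fun v => insert v (nbrs s.G v))).erase s.v0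

/-- `S`: the marked nodes outside `K`. -/
noncomputable def Sset (s : Setup V) (m : V → Bool) : Finset V :=
  univ.filter (fun v => m v = true ∧ v ∉ Kset s)

/-- Auxiliary breadth-first layering: `(layersAux s m u d).1 = M^d` and
`(layersAux s m u d).2 = ⋃_{i ≤ d} M^i`.  Here `M⁰ = F⁰ = {v₀}`,
`F^d = {v ∈ M^d : u v ∈ {r,b}}` for `d ≥ 1` (a node of `M^d`, `d ≥ 1`, samples mirroredly,
so it has flipped proposals exactly when its uniform draw `u v` is red or blue), and
`M^{d+1} = (N(F^d) ∩ S) \ ⋃_{i ≤ d} M^i`. -/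
noncomputable def layersAux (s : Setup V) (m : V → Bool) (u : V → Fin s.q) :
    ℕ → Finset V × Finset V
  | 0 => ({s.v0}, {s.v0})
  | d + 1 =>
      let prev := layersAux s m u d
      let F : Finset V :=
        if d = 0 then {s.v0} else prev.1.filter (fun v => u v = s.r ∨ u v = s.b)
      let Mnext : Finset V := ((F.biUnion (fun w => nbrs s.G w)) ∩ Sset s m) \ prev.2
      (Mnext, prev.2 ∪ Mnext)

/-- The breadth-first layer `M^d`. -/
noncomputable def layerM (s : Setup V) (m : V → Bool) (u : V → Fin s.q) (d : ℕ) : Finset V :=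
  (layersAux s m u d).1

/-- The set `F^d ⊆ M^d` of nodes with flipped proposals (`F⁰ = {v₀}`). -/
noncomputable def layerF (s : Setup V) (m : V → Bool) (u : V → Fin s.q) (d : ℕ) : Finset V :=
  if d = 0 then {s.v0} else (layerM s m u d).filter (fun v => u v = s.r ∨ u v = s.b)

/-- A node samples its proposals mirroredly iff it lies in a layer `M^d` with `d ≥ 1`. -/
def Mirrored (s : Setup V) (m : V → Bool) (u : V → Fin s.q) (v : V) : Prop :=
  ∃ d : ℕ, 1 ≤ d ∧ v ∈ layerM s m u d

/-- Exchange red and blue, leaving all other colors fixed. -/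
noncomputable def flipRB (s : Setup V) (c : Fin s.q) : Fin s.q :=
  if c = s.r then s.b else if c = s.b then s.r else c

/-- Proposal of node `v` in chain `X`: its uniform draw `u v` if marked
(both consistent and mirrored sampling propose the draw itself in chain `X`),
and its current color otherwise. -/
noncomputable def cX (s : Setup V) (m : V → Bool) (u : V → Fin s.q) : V → Fin s.q :=
  fun v => if m v then u v else s.X v

/-- Proposal of node `v` in chain `Y`: for a marked node, the draw `u v`, with red and blue
exchanged when `v` samples mirroredly; the current color if unmarked. -/
noncomputable def cY (s : Setup V) (m : V → Bool) (u : V → Fin s.q) : V → Fin s.q :=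
  fun v => if m v then (if Mirrored s m u v then flipRB s (u v) else u v) else s.Y v

/-- The coloring `X'` after one coupled step. -/
noncomputable def X' (s : Setup V) (m : V → Bool) (u : V → Fin s.q) : V → Fin s.q :=
  stepFn s.G s.X (cX s m u)

/-- The coloring `Y'` after one coupled step. -/
noncomputable def Y' (s : Setup V) (m : V → Bool) (u : V → Fin s.q) : V → Fin s.q :=
  stepFn s.G s.Y (cY s m u)

/-- Probability weight of the randomness `(m, u)` of one coupled step: each node is marked
independently with probability `γ`, and each node makes one independent uniform draw in `[q]`. -/
noncomputable def weight (γ : ℝ) (s : Setup V) (m : V → Bool) : ℝ :=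
  (∏ v : V, (if m v then γ else 1 - γ)) * ((1 : ℝ) / s.q) ^ (Fintype.card V)

end LGCoupling

namespace LGCoupling

variable {V : Type*} [Fintype V] [DecidableEq V]

lemma flipRB_r (s : Setup V) : flipRB s s.r = s.b := by simp [flipRB]

lemma flipRB_b (s : Setup V) (h : s.r ≠ s.b) : flipRB s s.b = s.r := by
  simp [flipRB, h.symm]

lemma flipRB_eq_self (s : Setup V) {c : Fin s.q} (h1 : c ≠ s.r) (h2 : c ≠ s.b) :
    flipRB s c = c := by simp [flipRB, h1, h2]

lemma ne_rb_of_flip_eq (s : Setup V) (hrb : s.r ≠ s.b) {c : Fin s.q}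
    (h : flipRB s c = c) : c ≠ s.r ∧ c ≠ s.b := by
  constructor
  · rintro rfl; rw [flipRB_r] at h; exact hrb h.symm
  · rintro rfl; rw [flipRB_b s hrb] at h; exact hrb h

lemma mem_Sset_iff (s : Setup V) (m : V → Bool) (v : V) :
    v ∈ Sset s m ↔ m v = true ∧ v ∉ Kset s := by simp [Sset]

lemma mem_Kset_self (s : Setup V) {v : V} (hv0 : v ≠ s.v0)
    (h : s.X v = s.r ∨ s.X v = s.b) : v ∈ Kset s := by
  refine Finset.mem_erase.2 ⟨hv0, ?_⟩
  exact Finset.mem_biUnion.2 ⟨v, by simp [Bset, hv0, h], Finset.mem_insert_self _ _⟩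

lemma X_ne_rb (s : Setup V) {m : V → Bool} {v : V} (hvS : v ∈ Sset s m)
    (hv0 : v ≠ s.v0) : s.X v ≠ s.r ∧ s.X v ≠ s.b := by
  have hK := ((mem_Sset_iff s m v).1 hvS).2
  constructor <;> intro hc <;> exact hK (mem_Kset_self s hv0 (by tauto))

lemma layerM_zero (s : Setup V) (m : V → Bool) (u : V → Fin s.q) :
    layerM s m u 0 = {s.v0} := rfl

lemma layerM_succ (s : Setup V) (m : V → Bool) (u : V → Fin s.q) (d : ℕ) :
    layerM s m u (d + 1) =
      (((layerF s m u d).biUnion (fun w => nbrs s.G w)) ∩ Sset s m) \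
        (layersAux s m u d).2 := by
  by_cases hd : d = 0 <;> simp [layerM, layersAux, layerF, hd]

lemma layersAux_snd_succ (s : Setup V) (m : V → Bool) (u : V → Fin s.q) (d : ℕ) :
    (layersAux s m u (d + 1)).2 = (layersAux s m u d).2 ∪ layerM s m u (d + 1) := rfl

lemma mem_layersAux_snd (s : Setup V) (m : V → Bool) (u : V → Fin s.q) (d : ℕ) (w : V) :
    w ∈ (layersAux s m u d).2 ↔ ∃ i, i ≤ d ∧ w ∈ layerM s m u i := by
  induction d with
  | zero =>
    constructor
    · intro h; exact ⟨0, le_refl 0, h⟩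
    · rintro ⟨i, hi, h⟩
      obtain rfl := Nat.le_zero.1 hi
      exact h
  | succ d ih =>
    rw [layersAux_snd_succ, Finset.mem_union, ih]
    constructor
    · rintro (⟨i, hi, h⟩ | h)
      · exact ⟨i, by omega, h⟩
      · exact ⟨d + 1, le_refl _, h⟩
    · rintro ⟨i, hi, h⟩
      rcases Nat.lt_or_ge i (d + 1) with hlt | hge
      · exact Or.inl ⟨i, by omega, h⟩
      · have : i = d + 1 := by omega
        subst this; exact Or.inr h

lemma v0_mem_snd (s : Setup V) (m : V → Bool) (u : V → Fin s.q) (d : ℕ) :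
    s.v0 ∈ (layersAux s m u d).2 := by
  induction d with
  | zero => simp [layersAux]
  | succ d ih => rw [layersAux_snd_succ]; exact Finset.mem_union_left _ ih

lemma v0_not_mem_layerM (s : Setup V) (m : V → Bool) (u : V → Fin s.q) {d : ℕ}
    (hd : 1 ≤ d) : s.v0 ∉ layerM s m u d := by
  obtain ⟨e, rfl⟩ : ∃ e, d = e + 1 := ⟨d - 1, by omega⟩
  rw [layerM_succ]
  intro h
  exact (Finset.mem_sdiff.1 h).2 (v0_mem_snd s m u e)

lemma not_mirrored_v0 (s : Setup V) (m : V → Bool) (u : V → Fin s.q) :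
    ¬ Mirrored s m u s.v0 := by
  rintro ⟨d, hd, h⟩; exact v0_not_mem_layerM s m u hd h

lemma layerM_subset_Sset (s : Setup V) (m : V → Bool) (u : V → Fin s.q) {d : ℕ}
    (hd : 1 ≤ d) : layerM s m u d ⊆ Sset s m := by
  obtain ⟨e, rfl⟩ : ∃ e, d = e + 1 := ⟨d - 1, by omega⟩
  rw [layerM_succ]
  intro w hw
  exact (Finset.mem_inter.1 (Finset.mem_sdiff.1 hw).1).2

lemma layerF_subset_layerM (s : Setup V) (m : V → Bool) (u : V → Fin s.q) {d : ℕ}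
    (hd : 1 ≤ d) : layerF s m u d ⊆ layerM s m u d := by
  rw [layerF, if_neg (by omega)]
  exact Finset.filter_subset _ _

lemma mem_layerF_iff (s : Setup V) (m : V → Bool) (u : V → Fin s.q) {d : ℕ}
    (hd : 1 ≤ d) (w : V) :
    w ∈ layerF s m u d ↔ w ∈ layerM s m u d ∧ (u w = s.r ∨ u w = s.b) := by
  rw [layerF, if_neg (by omega : ¬ d = 0), Finset.mem_filter]

lemma cX_marked (s : Setup V) (m : V → Bool) (u : V → Fin s.q) {v : V}
    (h : m v = true) : cX s m u v = u v := by simp [cX, h]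

lemma cY_mirrored (s : Setup V) (m : V → Bool) (u : V → Fin s.q) {v : V}
    (h : m v = true) (hm : Mirrored s m u v) : cY s m u v = flipRB s (u v) := by
  simp [cY, h, hm]

/-- A node `w ≠ v₀` with flipped proposals is marked, mirrored, and drew red or blue. -/
lemma flipped_struct (s : Setup V) (hs : s.Valid) (m : V → Bool) (u : V → Fin s.q)
    {w : V} (hw0 : w ≠ s.v0) (hne : cX s m u w ≠ cY s m u w) :
    m w = true ∧ Mirrored s m u w ∧ (u w = s.r ∨ u w = s.b) := by
  by_cases hm : m w = true
  · by_cases hmir : Mirrored s m u w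
    · refine ⟨hm, hmir, ?_⟩
      by_contra h
      push_neg at h
      exact hne (by rw [cX_marked s m u hm, cY_mirrored s m u hm hmir,
        flipRB_eq_self s h.1 h.2])
    · exact absurd (by simp [cX, cY, hm, hmir]) hne
  · exact absurd (by simp [cX, cY, hm]; exact hs.2.2.2 w hw0) hne

/-- Membership of a neighbor of a flipped node in some positive layer. -/
lemma mirrored_of_nbr_layerF (s : Setup V) (m : V → Bool) (u : V → Fin s.q)
    {d : ℕ} {w v : V} (hw : w ∈ layerF s m u d)
    (hvS : v ∈ Sset s m) (hadj : s.G.Adj w v) (hv0 : v ≠ s.v0) :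
    Mirrored s m u v := by
  by_cases h2 : v ∈ (layersAux s m u d).2
  · obtain ⟨i, hi, hmem⟩ := (mem_layersAux_snd s m u d v).1 h2
    have hi1 : 1 ≤ i := by
      rcases Nat.eq_zero_or_pos i with rfl | h
      · rw [layerM_zero, Finset.mem_singleton] at hmem
        exact absurd hmem hv0
      · exact h
    exact ⟨i, hi1, hmem⟩
  · refine ⟨d + 1, by omega, ?_⟩
    rw [layerM_succ]
    refine Finset.mem_sdiff.2 ⟨Finset.mem_inter.2 ⟨?_, hvS⟩, h2⟩
    exact Finset.mem_biUnion.2 ⟨w, hw, by simp [nbrs, hadj]⟩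

lemma mirrored_of_adj_v0 (s : Setup V) (m : V → Bool) (u : V → Fin s.q)
    {v : V} (hvS : v ∈ Sset s m) (hadj : s.G.Adj s.v0 v) (hv0 : v ≠ s.v0) :
    Mirrored s m u v :=
  mirrored_of_nbr_layerF s m u (d := 0) (by simp [layerF]) hvS hadj hv0

end LGCoupling

namespace LGCoupling

variable {V : Type*} [Fintype V] [DecidableEq V]

/-- If `v ∈ S`, `v ≠ v₀` has consistent (equal) proposals, the acceptance
decisions agree in both chains. -/
lemma accept_iff_of_consistent (s : Setup V) (hs : s.Valid) (m : V → Bool)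
    (u : V → Fin s.q) {v : V} (hvS : v ∈ Sset s m) (hv0 : v ≠ s.v0)
    (heq : cX s m u v = cY s m u v) :
    (Accept s.G s.X (cX s m u) v ↔ Accept s.G s.Y (cY s m u) v) := by
  have hrb : s.r ≠ s.b := hs.1
  have hm : m v = true := ((mem_Sset_iff s m v).1 hvS).1
  have hXY : s.X v = s.Y v := hs.2.2.2 v hv0
  have hXv := X_ne_rb s hvS hv0
  -- if v is mirrored then (since its proposals agree) its draw is neither red nor blue
  have hmirc : Mirrored s m u v → u v ≠ s.r ∧ u v ≠ s.b := by
    intro hmir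
    have h := heq
    rw [cX_marked s m u hm, cY_mirrored s m u hm hmir] at h
    exact ne_rb_of_flip_eq s hrb h.symm
  have key : ∀ w : V, s.G.Adj v w →
      ((cX s m u v ≠ s.X w ∧ cX s m u v ≠ cX s m u w ∧ cX s m u w ≠ s.X v ∧
          cX s m u w ≠ cX s m u v) ↔
        (cY s m u v ≠ s.Y w ∧ cY s m u v ≠ cY s m u w ∧ cY s m u w ≠ s.Y v ∧
          cY s m u w ≠ cY s m u v)) := by
    intro w hadj
    by_cases hw0 : w = s.v0
    · subst hw0
      -- v is adjacent to v₀, hence mirrored, hence u v ∉ {r, b}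
      have hmir := mirrored_of_adj_v0 s m u hvS hadj.symm hv0
      have huv := hmirc hmir
      have hcvX : cX s m u v = u v := cX_marked s m u hm
      have hcvY : cY s m u v = u v := by rw [← heq, hcvX]
      by_cases hmw : m s.v0 = true
      · have hcw : cX s m u s.v0 = u s.v0 := cX_marked s m u hmw
        have hcw' : cY s m u s.v0 = u s.v0 := by
          simp [cY, hmw, not_mirrored_v0 s m u]
        constructor
        · rintro ⟨h1, h2, h3, h4⟩
          refine ⟨?_, ?_, ?_, ?_⟩
          · rw [hcvY, hs.2.2.1]; exact huv.2
          · rw [hcvY, hcw']; rw [hcvX, hcw] at h2; exact h2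
          · rw [hcw', ← hXY]; rw [hcw] at h3; exact h3
          · rw [hcvY, hcw']; rw [hcvX, hcw] at h4; exact h4
        · rintro ⟨h1, h2, h3, h4⟩
          refine ⟨?_, ?_, ?_, ?_⟩
          · rw [hcvX, hs.2.1]; exact huv.1
          · rw [hcvX, hcw]; rw [hcvY, hcw'] at h2; exact h2
          · rw [hcw, hXY]; rw [hcw'] at h3; exact h3
          · rw [hcvX, hcw]; rw [hcvY, hcw'] at h4; exact h4
      · have hcw : cX s m u s.v0 = s.X s.v0 := by simp [cX, hmw]
        have hcw' : cY s m u s.v0 = s.Y s.v0 := by simp [cY, hmw]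
        constructor
        · rintro _
          refine ⟨?_, ?_, ?_, ?_⟩
          · rw [hcvY, hs.2.2.1]; exact huv.2
          · rw [hcvY, hcw', hs.2.2.1]; exact huv.2
          · rw [hcw', hs.2.2.1, ← hXY]; exact fun h => hXv.2 h.symm
          · rw [hcvY, hcw', hs.2.2.1]; exact fun h => huv.2 h.symm
        · rintro _
          refine ⟨?_, ?_, ?_, ?_⟩
          · rw [hcvX, hs.2.1]; exact huv.1
          · rw [hcvX, hcw, hs.2.1]; exact huv.1
          · rw [hcw, hs.2.1]; exact fun h => hXv.1 h.symm
          · rw [hcvX, hcw, hs.2.1]; exact fun h => huv.1 h.symm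
    · have hXYw : s.X w = s.Y w := hs.2.2.2 w hw0
      by_cases heqw : cX s m u w = cY s m u w
      · rw [heq, heqw, hXYw, hXY]
      · obtain ⟨hmw, hmirw, hurw⟩ := flipped_struct s hs m u hw0 heqw
        obtain ⟨dw, hdw, hwM⟩ := hmirw
        have hmirw : Mirrored s m u w := ⟨dw, hdw, hwM⟩
        have hwF : w ∈ layerF s m u dw := (mem_layerF_iff s m u hdw w).2 ⟨hwM, hurw⟩
        have hmir := mirrored_of_nbr_layerF s m u hwF hvS hadj.symm hv0
        have huv := hmirc hmir
        have hcv : cX s m u v = u v := cX_marked s m u hm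
        have hcw : cX s m u w = u w := cX_marked s m u hmw
        have hcw' : cY s m u w = flipRB s (u w) := cY_mirrored s m u hmw hmirw
        -- both `cX w` and `cY w` lie in `{r, b}`
        have hXwrb : cX s m u w = s.r ∨ cX s m u w = s.b := by
          rw [hcw]; exact hurw
        have hYwrb : cY s m u w = s.r ∨ cY s m u w = s.b := by
          rw [hcw']
          rcases hurw with h | h <;> rw [h]
          · exact Or.inr (flipRB_r s)
          · exact Or.inl (flipRB_b s hrb)
        have hcvrb : cX s m u v ≠ s.r ∧ cX s m u v ≠ s.b := by
          rw [hcv]; exact huv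
        constructor
        · rintro ⟨h1, _, _, _⟩
          refine ⟨by rw [← heq, ← hXYw]; exact h1, ?_, ?_, ?_⟩
          · rw [← heq]; rcases hYwrb with h | h <;> rw [h]
            · exact hcvrb.1
            · exact hcvrb.2
          · rw [← hXY]; rcases hYwrb with h | h <;> rw [h]
            · exact fun hh => hXv.1 hh.symm
            · exact fun hh => hXv.2 hh.symm
          · rw [← heq]; rcases hYwrb with h | h <;> rw [h]
            · exact fun hh => hcvrb.1 hh.symm
            · exact fun hh => hcvrb.2 hh.symm
        · rintro ⟨h1, _, _, _⟩
          refine ⟨by rw [heq, hXYw] at *; exact h1, ?_, ?_, ?_⟩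
          · rcases hXwrb with h | h <;> rw [h]
            · exact hcvrb.1
            · exact hcvrb.2
          · rcases hXwrb with h | h <;> rw [h]
            · exact fun hh => hXv.1 hh.symm
            · exact fun hh => hXv.2 hh.symm
          · rcases hXwrb with h | h <;> rw [h]
            · exact fun hh => hcvrb.1 hh.symm
            · exact fun hh => hcvrb.2 hh.symm
  constructor
  · intro hA w hadj
    exact (key w hadj).1 (hA w hadj)
  · intro hA w hadj
    exact (key w hadj).2 (hA w hadj)

/-- Flip-path construction: every node of a positive layer is reached by a path
from `v₀` through the flipped layers. -/
lemma exists_flip_path (s : Setup V) (m : V → Bool) (u : V → Fin s.q) :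
    ∀ ℓ : ℕ, 1 ≤ ℓ → ∀ v ∈ layerM s m u ℓ, ∃ p : ℕ → V,
      p 0 = s.v0 ∧ p ℓ = v ∧ (∀ i, i < ℓ → s.G.Adj (p i) (p (i + 1))) ∧
      (∀ i, 1 ≤ i → i < ℓ → p i ∈ layerF s m u i) := by
  intro ℓ
  induction ℓ with
  | zero => omega
  | succ ℓ ih =>
    intro _ v hv
    rw [layerM_succ] at hv
    obtain ⟨w, hwF, hvw⟩ :=
      Finset.mem_biUnion.1 (Finset.mem_inter.1 (Finset.mem_sdiff.1 hv).1).1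
    have hadj : s.G.Adj w v := by
      simpa [nbrs] using hvw
    rcases Nat.eq_zero_or_pos ℓ with rfl | hℓ
    · have hw : w = s.v0 := by simpa [layerF] using hwF
      subst hw
      refine ⟨fun i => if i = 0 then s.v0 else v, rfl, by simp, ?_, ?_⟩
      · intro i hi
        have : i = 0 := by omega
        subst this; simpa using hadj
      · intro i hi hi'; omega
    · obtain ⟨p', hp0, hpℓ, hpadj, hpF⟩ :=
        ih hℓ w (layerF_subset_layerM s m u hℓ hwF)
      refine ⟨fun i => if i = ℓ + 1 then v else p' i, ?_, by simp, ?_, ?_⟩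
      · simp [hp0]
      · intro i hi
        rcases Nat.lt_or_ge i ℓ with h | h
        · have h1 : i ≠ ℓ + 1 := by omega
          have h2 : i + 1 ≠ ℓ + 1 := by omega
          simpa [h1, h2, h.ne] using hpadj i h
        · have : i = ℓ := by omega
          subst this
          have h1 : i ≠ i + 1 := by omega
          simpa [h1, hpℓ] using hadj
      · intro i h1 h2
        rcases Nat.lt_or_ge i ℓ with h | h
        · have hne : i ≠ ℓ + 1 := by omega
          simpa [hne] using hpF i h1 h
        · have : i = ℓ := by omega
          subst this
          have hne : i ≠ i + 1 := by omega
          simpa [hne, hpℓ] using hwF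

end LGCoupling

open LGCoupling in
/-- if `X' v ≠ Y' v` for some `v ∈ S`, `v ≠ v₀`, then there is a flip path
`(v₀, …, v_ℓ = v)` of length `ℓ ≥ 1` in `G` (i.e. `v_i ∈ F^i` for `1 ≤ i ≤ ℓ`), and `v`'s
proposals are flipped and opposite to the last red/blue colors seen on the path:
`c^X_v = c_Y ≠ c^Y_v = c_X`, where `(c_X, c_Y) = (c^X_{v_{ℓ−1}}, c^Y_{v_{ℓ−1}})` if `ℓ > 1`
and `(c_X, c_Y) = (r, b)` if `ℓ = 1`. -/
theorem flip_path_of_diff_in_S {V : Type*} [Fintype V] [DecidableEq V]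
    (s : Setup V) (hs : s.Valid) (m : V → Bool) (u : V → Fin s.q)
    (v : V) (hvS : v ∈ Sset s m) (hv0 : v ≠ s.v0)
    (hdiff : X' s m u v ≠ Y' s m u v) :
    ∃ ℓ : ℕ, 1 ≤ ℓ ∧ ∃ p : ℕ → V,
      p 0 = s.v0 ∧ p ℓ = v ∧
      (∀ i : ℕ, i < ℓ → s.G.Adj (p i) (p (i + 1))) ∧
      (∀ i : ℕ, 1 ≤ i → i ≤ ℓ → p i ∈ layerF s m u i) ∧
      cX s m u v ≠ cY s m u v ∧
      cX s m u v = (if ℓ = 1 then s.b else cY s m u (p (ℓ - 1))) ∧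
      cY s m u v = (if ℓ = 1 then s.r else cX s m u (p (ℓ - 1))) := by
  have hrb : s.r ≠ s.b := hs.1
  have hm : m v = true := ((mem_Sset_iff s m v).1 hvS).1
  have hXY : s.X v = s.Y v := hs.2.2.2 v hv0
  have hne : cX s m u v ≠ cY s m u v := by
    intro heq
    apply hdiff
    have hiff := accept_iff_of_consistent s hs m u hvS hv0 heq
    unfold X' Y' stepFn
    by_cases hA : Accept s.G s.X (cX s m u) v
    · rw [if_pos hA, if_pos (hiff.1 hA)]; exact heq
    · rw [if_neg hA, if_neg (fun h => hA (hiff.2 h))]; exact hXY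
  obtain ⟨_, hmirv, hurv⟩ := flipped_struct s hs m u hv0 hne
  obtain ⟨ℓ, hℓ, hvM⟩ := hmirv
  have hmirv : Mirrored s m u v := ⟨ℓ, hℓ, hvM⟩
  have hvF : v ∈ layerF s m u ℓ := (mem_layerF_iff s m u hℓ v).2 ⟨hvM, hurv⟩
  obtain ⟨p, hp0, hpl, hpadj, hpF⟩ := exists_flip_path s m u ℓ hℓ v hvM
  have hcv : cX s m u v = u v := cX_marked s m u hm
  have hcv' : cY s m u v = flipRB s (u v) := cY_mirrored s m u hm hmirv
  refine ⟨ℓ, hℓ, p, hp0, hpl, hpadj, ?_, hne, ?_, ?_⟩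
  · intro i h1 h2
    rcases Nat.lt_or_ge i ℓ with h | h
    · exact hpF i h1 h
    · have : i = ℓ := by omega
      subst this
      rw [hpl]; exact hvF
  all_goals {
    rcases Nat.lt_or_ge ℓ 2 with hcase | hcase
    · -- ℓ = 1
      have hℓ1 : ℓ = 1 := by omega
      subst hℓ1
      have hadj01 : s.G.Adj s.v0 v := by
        have := hpadj 0 (by omega)
        rwa [hp0, hpl] at this
      have hub : u v = s.b := by
        rcases hurv with h | h
        · exfalso
          apply hdiff
          have hAX : ¬ Accept s.G s.X (cX s m u) v := fun hA =>
            (hA s.v0 hadj01.symm).1 (by rw [hcv, h, hs.2.1])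
          have hAY : ¬ Accept s.G s.Y (cY s m u) v := fun hA =>
            (hA s.v0 hadj01.symm).1 (by rw [hcv', h, flipRB_r, hs.2.2.1])
          unfold X' Y' stepFn
          rw [if_neg hAX, if_neg hAY]
          exact hXY
        · exact h
      rw [if_pos rfl]
      first
        | (rw [hcv, hub])
        | (rw [hcv', hub, flipRB_b s hrb])
    · -- ℓ ≥ 2
      have hℓ1 : 1 ≤ ℓ - 1 := by omega
      have hwF : p (ℓ - 1) ∈ layerF s m u (ℓ - 1) := hpF (ℓ - 1) hℓ1 (by omega)
      obtain ⟨hwM, hurw⟩ := (mem_layerF_iff s m u hℓ1 (p (ℓ - 1))).1 hwF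
      have hmw : m (p (ℓ - 1)) = true :=
        ((mem_Sset_iff s m _).1 (layerM_subset_Sset s m u hℓ1 hwM)).1
      have hmirw : Mirrored s m u (p (ℓ - 1)) := ⟨ℓ - 1, hℓ1, hwM⟩
      have hcw : cX s m u (p (ℓ - 1)) = u (p (ℓ - 1)) := cX_marked s m u hmw
      have hcw' : cY s m u (p (ℓ - 1)) = flipRB s (u (p (ℓ - 1))) :=
        cY_mirrored s m u hmw hmirw
      have hadjwv : s.G.Adj (p (ℓ - 1)) v := by
        have h := hpadj (ℓ - 1) (by omega)
        have he : ℓ - 1 + 1 = ℓ := by omega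
        rwa [he, hpl] at h
      have hneq : u v ≠ u (p (ℓ - 1)) := by
        intro h
        apply hdiff
        have hAX : ¬ Accept s.G s.X (cX s m u) v := fun hA =>
          (hA (p (ℓ - 1)) hadjwv.symm).2.1 (by rw [hcv, h, hcw])
        have hAY : ¬ Accept s.G s.Y (cY s m u) v := fun hA =>
          (hA (p (ℓ - 1)) hadjwv.symm).2.1 (by rw [hcv', h, hcw'])
        unfold X' Y' stepFn
        rw [if_neg hAX, if_neg hAY]
        exact hXY
      rw [if_neg (by omega : ¬ ℓ = 1)]
      rcases hurv with h1 | h1 <;> rcases hurw with h2 | h2 <;>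
        first
          | (exact absurd (h1.trans h2.symm) hneq)
          | (first
              | (rw [hcv, hcw', h1, h2, flipRB_b s hrb])
              | (rw [hcv, hcw', h1, h2, flipRB_r])
              | (rw [hcv', hcw, h1, h2, flipRB_r])
              | (rw [hcv', hcw, h1, h2, flipRB_b s hrb]))
  }
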